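/- Fix A > 0 and a wavenumber α > 0, and for B > 0 set κ_α(B) := √(α² + B) and λ*_α(B) := (α²A/2)·(κ_α(B)²/B)·[1 − tanh(κ_α(B))/κ_α(B)]^{−1}. Then the map B ↦ λ*_α(B) is strictly decreasing on (0,∞) and λ*_α(B) → α²A/2 as B → ∞. -/

import Mathlib

/-- `κ_α(B) = √(α² + B)`. -/
noncomputable def kappaAlpha (α B : ℝ) : ℝ := Real.sqrt (α ^ 2 + B)

/-- The squared maximal sloshing frequency `λ*_α(B)` for wavenumber `α > 0`
with surface tension. -/
noncomputable def lamStarAlpha (A α B : ℝ) : ℝ :=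
  (α ^ 2 * A / 2) * (kappaAlpha α B ^ 2 / B) *
    (1 - Real.tanh (kappaAlpha α B) / kappaAlpha α B)⁻¹

lemma hasDerivAt_tanh' (x : ℝ) :
    HasDerivAt Real.tanh (1 / Real.cosh x ^ 2) x := by
  have h := (Real.hasDerivAt_sinh x).div (Real.hasDerivAt_cosh x)
    (ne_of_gt (Real.cosh_pos x))
  have hfun : (Real.sinh / Real.cosh) = Real.tanh := by
    funext y; simp only [Pi.div_apply, Real.tanh_eq_sinh_div_cosh]
  rw [hfun] at h
  refine h.congr_deriv ?_
  have hc := Real.cosh_sq_sub_sinh_sq x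
  have : Real.cosh x ≠ 0 := ne_of_gt (Real.cosh_pos x)
  rw [div_left_inj' (pow_ne_zero 2 this)]
  nlinarith [hc]

lemma continuous_tanh' : Continuous Real.tanh := by
  have : (fun y => Real.sinh y / Real.cosh y) = Real.tanh := by
    funext y; rw [Real.tanh_eq_sinh_div_cosh]
  rw [← this]
  exact Real.continuous_sinh.div Real.continuous_cosh fun x => ne_of_gt (Real.cosh_pos x)

lemma tanh_pos' {x : ℝ} (hx : 0 < x) : 0 < Real.tanh x := by
  rw [Real.tanh_eq_sinh_div_cosh]
  exact div_pos (Real.sinh_pos_iff.mpr hx) (Real.cosh_pos x)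

lemma tanh_lt_self {x : ℝ} (hx : 0 < x) : Real.tanh x < x := by
  have hs : Real.sinh x < x * Real.cosh x := by
    have H : StrictMonoOn (fun y => y * Real.cosh y - Real.sinh y) (Set.Ici 0) := by
      apply strictMonoOn_of_deriv_pos (convex_Ici 0)
      · exact ((continuous_id.mul Real.continuous_cosh).sub Real.continuous_sinh).continuousOn
      · intro y hy
        rw [interior_Ici] at hy
        have h1 : HasDerivAt (fun y => y * Real.cosh y - Real.sinh y)
            (1 * Real.cosh y + y * Real.sinh y - Real.cosh y) y :=
          ((hasDerivAt_id y).mul (Real.hasDerivAt_cosh y)).sub (Real.hasDerivAt_sinh y)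
        rw [h1.deriv]
        have hy' : (0:ℝ) < y := hy
        have := Real.sinh_pos_iff.mpr hy'
        nlinarith
    have := H Set.self_mem_Ici (Set.mem_Ici.mpr hx.le) hx
    simp only [Real.cosh_zero, Real.sinh_zero, mul_one, zero_mul, sub_zero] at this
    linarith
  rw [Real.tanh_eq_sinh_div_cosh, div_lt_iff₀ (Real.cosh_pos x)]
  exact hs

lemma tanhDiv_strictAnti : StrictAntiOn (fun x => Real.tanh x / x) (Set.Ioi 0) := by
  apply strictAntiOn_of_deriv_neg (convex_Ioi 0)
  · exact (continuous_tanh'.continuousOn).div continuousOn_id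
      (fun x hx => ne_of_gt hx)
  · intro x hx
    rw [interior_Ioi] at hx
    have hx' : (0:ℝ) < x := hx
    have hd : HasDerivAt (fun y => Real.tanh y / y)
        ((1 / Real.cosh x ^ 2 * x - Real.tanh x * 1) / x ^ 2) x :=
      (hasDerivAt_tanh' x).div (hasDerivAt_id x) hx'.ne'
    rw [hd.deriv]
    apply div_neg_of_neg_of_pos _ (by positivity)
    have hlt : x < Real.sinh x * Real.cosh x := by
      have h1 := Real.self_lt_sinh_iff.mpr hx'
      have h2 := Real.one_le_cosh x
      nlinarith [Real.sinh_pos_iff.mpr hx']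
    rw [Real.tanh_eq_sinh_div_cosh]
    have hc := Real.cosh_pos x
    have hc2 : (0:ℝ) < Real.cosh x ^ 2 := by positivity
    rw [sub_neg, div_mul_eq_mul_div, mul_one, div_lt_div_iff₀ hc2 hc]
    nlinarith [mul_pos hc (sub_pos.mpr hlt)]

lemma kappa_pos {α B : ℝ} (hα : 0 < α) (hB : 0 < B) : 0 < kappaAlpha α B := by
  unfold kappaAlpha
  positivity

lemma kappa_sq {α B : ℝ} (hα : 0 < α) (hB : 0 ≤ B) :
    kappaAlpha α B ^ 2 = α ^ 2 + B := by
  unfold kappaAlpha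
  rw [Real.sq_sqrt (by positivity)]

lemma oneSubTanhDiv_pos {x : ℝ} (hx : 0 < x) : 0 < 1 - Real.tanh x / x := by
  have := tanh_lt_self hx
  have h : Real.tanh x / x < 1 := (div_lt_one hx).mpr this
  linarith

theorem lamStarAlpha_monotone_limit (A α : ℝ) (hA : 0 < A) (hα : 0 < α) :
    StrictAntiOn (lamStarAlpha A α) (Set.Ioi 0) ∧
    Filter.Tendsto (lamStarAlpha A α) Filter.atTop (nhds (α ^ 2 * A / 2)) := by
  set C := α ^ 2 * A / 2 with hC
  have hCpos : 0 < C := by positivity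
  constructor
  · intro x hx y hy hxy
    have hx' : (0:ℝ) < x := hx
    have hy' : (0:ℝ) < y := hy
    have hκx := kappa_pos hα hx'
    have hκy := kappa_pos hα hy'
    have hκlt : kappaAlpha α x < kappaAlpha α y := by
      unfold kappaAlpha
      exact Real.sqrt_lt_sqrt (by positivity) (by linarith)
    -- first factor
    have hu : kappaAlpha α y ^ 2 / y < kappaAlpha α x ^ 2 / x := by
      rw [kappa_sq hα hx'.le, kappa_sq hα hy'.le, div_lt_div_iff₀ hy' hx']
      nlinarith
    have huypos : 0 < kappaAlpha α y ^ 2 / y := by positivity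
    -- second factor
    have hg := tanhDiv_strictAnti (Set.mem_Ioi.mpr hκx) (Set.mem_Ioi.mpr hκy) hκlt
    have hpx := oneSubTanhDiv_pos hκx
    have hpy := oneSubTanhDiv_pos hκy
    have hv : (1 - Real.tanh (kappaAlpha α y) / kappaAlpha α y)⁻¹ <
        (1 - Real.tanh (kappaAlpha α x) / kappaAlpha α x)⁻¹ := by
      apply inv_strictAnti₀ hpx
      simp only at hg
      linarith
    have hvypos : 0 < (1 - Real.tanh (kappaAlpha α y) / kappaAlpha α y)⁻¹ := by positivity
    unfold lamStarAlpha
    rw [← hC, mul_assoc, mul_assoc]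
    apply mul_lt_mul_of_pos_left _ hCpos
    exact mul_lt_mul'' hu hv huypos.le hvypos.le
  · -- limit
    have hκtop : Filter.Tendsto (fun B => kappaAlpha α B) Filter.atTop Filter.atTop := by
      unfold kappaAlpha
      have hsqrt : Filter.Tendsto Real.sqrt Filter.atTop Filter.atTop := by
        apply Filter.tendsto_atTop_atTop.mpr
        intro b
        refine ⟨max 0 b ^ 2, fun a ha => ?_⟩
        calc b ≤ max 0 b := le_max_right _ _
          _ = Real.sqrt (max 0 b ^ 2) := (Real.sqrt_sq (le_max_left _ _)).symm
          _ ≤ Real.sqrt a := Real.sqrt_le_sqrt ha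
      have hadd : Filter.Tendsto (fun B : ℝ => α ^ 2 + B) Filter.atTop Filter.atTop :=
        Filter.tendsto_atTop_add_const_left _ _ Filter.tendsto_id
      exact hsqrt.comp hadd
    have hg0 : Filter.Tendsto
        (fun B => Real.tanh (kappaAlpha α B) / kappaAlpha α B) Filter.atTop (nhds 0) := by
      apply squeeze_zero' (g := fun B => (kappaAlpha α B)⁻¹)
      · filter_upwards [hκtop.eventually_gt_atTop 0] with B hB
        exact div_nonneg (tanh_pos' hB).le hB.le
      · filter_upwards [hκtop.eventually_gt_atTop 0] with B hB
        rw [div_le_iff₀ hB, inv_mul_cancel₀ hB.ne']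
        rw [Real.tanh_eq_sinh_div_cosh, div_le_one (Real.cosh_pos _)]
        exact le_of_lt (Real.sinh_lt_cosh _)
      · exact tendsto_inv_atTop_zero.comp hκtop
    have hv1 : Filter.Tendsto
        (fun B => (1 - Real.tanh (kappaAlpha α B) / kappaAlpha α B)⁻¹)
        Filter.atTop (nhds 1) := by
      have : Filter.Tendsto
          (fun B => 1 - Real.tanh (kappaAlpha α B) / kappaAlpha α B)
          Filter.atTop (nhds 1) := by
        simpa using (tendsto_const_nhds.sub hg0)
      simpa using this.inv₀ (by norm_num)
    have hu1 : Filter.Tendsto (fun B => kappaAlpha α B ^ 2 / B) Filter.atTop (nhds 1) := by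
      have h1 : Filter.Tendsto (fun B : ℝ => α ^ 2 / B + 1) Filter.atTop (nhds 1) := by
        have := (tendsto_const_nhds (x := α ^ 2) (f := Filter.atTop (α := ℝ))).div_atTop
          Filter.tendsto_id
        simpa using this.add (tendsto_const_nhds (x := (1:ℝ)))
      apply h1.congr'
      filter_upwards [Filter.eventually_gt_atTop 0] with B hB
      rw [kappa_sq hα hB.le]
      field_simp
    have := ((tendsto_const_nhds (x := C)).mul hu1).mul hv1
    simp only [mul_one] at this
    exact this
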